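/- Let F : C → Vect_k^f be a k-linear functor with all F(X) finite-dimensional, and define F ⊗ F : C × C → Vect_k^f by (F ⊗ F)(X,Y) = F(X) ⊗ F(Y) on objects and (F ⊗ F)(f,g) = F(f) ⊗ F(g) on morphisms. Then Coend(F ⊗ F) ≅ Coend(F) ⊗ Coend(F) as coalgebras, where Coend(F) ⊗ Coend(F) carries the tensor product coalgebra structure. Explicitly, if {i_X} is a realization of Coend(F), then the maps i_{X,Y} : Hom_k(F(X) ⊗ F(Y), F(X) ⊗ F(Y)) → Coend(F) ⊗ Coend(F) determined by i_{X,Y}(S ⊗ T) = i_X(S) ⊗ i_Y(T) make Coend(F) ⊗ Coend(F) a realization of Coend(F ⊗ F), and each i_{X,Y} is a coalgebra map. -/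

import Mathlib

/- STATEMENT 11: Coend(F ⊗ F) ≅ Coend(F) ⊗ Coend(F) as coalgebras: if {i_X}
is a realization of Coend(F), then the maps
i_{X,Y} : End_k(F X ⊗ F Y) → Coend(F) ⊗ Coend(F) determined by
i_{X,Y}(S ⊗ T) = i_X(S) ⊗ i_Y(T) make Coend(F) ⊗ Coend(F) a realization of
the coend of the bifunctor F ⊗ F, and each i_{X,Y} is a coalgebra map from the
comatrix coalgebra End_k(F X ⊗ F Y) to the tensor product coalgebra. -/

open CategoryTheory TensorProduct

set_option maxHeartbeats 2000000
set_option synthInstance.maxHeartbeats 400000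

noncomputable section
universe w₁ w₂ u
variable (k : Type) [Field k]

def smulRightL {M : Type} [AddCommGroup M] [Module k M] (x : M) :
    (M →ₗ[k] k) →ₗ[k] (M →ₗ[k] M) where
  toFun f := f.smulRight x
  map_add' f g := by ext y; simp [add_smul]
  map_smul' c f := by ext y; simp [smul_smul]

/-- The comatrix comultiplication on `Hom_k(M,M)` for finite-dimensional `M`:
`Δ(β ⊗ x) = Σ_i (β ⊗ x_i) ⊗ (x^i ⊗ x)`.  The corresponding counit is the
trace. -/
def comatrixComul (M : Type) [AddCommGroup M] [Module k M] [Module.Finite k M] :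
    (M →ₗ[k] M) →ₗ[k] ((M →ₗ[k] M) ⊗[k] (M →ₗ[k] M)) :=
  let b := Module.Free.chooseBasis k M
  ∑ i, ∑ l,
    ((TensorProduct.mk k (M →ₗ[k] M) (M →ₗ[k] M)).flip ((b.coord l).smulRight (b i))) ∘ₗ
      (smulRightL k (b l)) ∘ₗ (LinearMap.llcomp k M M k (b.coord i))

variable (C : Type u) [SmallCategory C] [Preadditive C] [CategoryTheory.Linear k C] [Abelian C]
variable (F : C ⥤ ModuleCat k) [F.Additive] [F.Linear k]

/-- Dinaturality of a family of maps `Hom_k(F X, F X) → U`. -/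
def DinatC (U : Type w₁) [AddCommGroup U] [Module k U]
    (i : ∀ X : C, (F.obj X →ₗ[k] F.obj X) →ₗ[k] U) : Prop :=
  ∀ (X Y : C) (f : Y ⟶ X) (S : F.obj X →ₗ[k] F.obj Y),
    i X (((F.map f).hom : F.obj Y →ₗ[k] F.obj X) ∘ₗ S)
      = i Y (S ∘ₗ ((F.map f).hom : F.obj Y →ₗ[k] F.obj X))

/-- `(U, i)` is a realization of `Coend(F)`: a dinatural family which is
initial among all such. -/
def IsCoendRealization (U : Type w₁) [AddCommGroup U] [Module k U]
    (i : ∀ X : C, (F.obj X →ₗ[k] F.obj X) →ₗ[k] U) : Prop :=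
  DinatC k C F U i ∧
  ∀ (V : Type w₂) [AddCommGroup V] [Module k V]
    (j : ∀ X : C, (F.obj X →ₗ[k] F.obj X) →ₗ[k] V), DinatC k C F V j →
    ∃! φ : U →ₗ[k] V, ∀ X : C, φ ∘ₗ i X = j X

/-- Dinaturality for a family over pairs of objects, i.e. for the bifunctor
`F ⊗ F : C × C → Vect_k`. -/
def DinatC2 (U : Type w₁) [AddCommGroup U] [Module k U]
    (i2 : ∀ X Y : C,
      ((F.obj X ⊗[k] F.obj Y) →ₗ[k] (F.obj X ⊗[k] F.obj Y)) →ₗ[k] U) : Prop :=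
  ∀ (X X' Y Y' : C) (f : X' ⟶ X) (g : Y' ⟶ Y)
    (T : (F.obj X ⊗[k] F.obj Y) →ₗ[k] (F.obj X' ⊗[k] F.obj Y')),
    i2 X Y ((TensorProduct.map ((F.map f).hom : F.obj X' →ₗ[k] F.obj X)
        ((F.map g).hom : F.obj Y' →ₗ[k] F.obj Y)) ∘ₗ T)
      = i2 X' Y' (T ∘ₗ (TensorProduct.map ((F.map f).hom : F.obj X' →ₗ[k] F.obj X)
        ((F.map g).hom : F.obj Y' →ₗ[k] F.obj Y)))

/-- `(U, i2)` is a realization of the coend of the bifunctor `F ⊗ F`. -/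
def IsCoend2Realization (U : Type w₁) [AddCommGroup U] [Module k U]
    (i2 : ∀ X Y : C,
      ((F.obj X ⊗[k] F.obj Y) →ₗ[k] (F.obj X ⊗[k] F.obj Y)) →ₗ[k] U) : Prop :=
  DinatC2 k C F U i2 ∧
  ∀ (V : Type w₂) [AddCommGroup V] [Module k V]
    (j2 : ∀ X Y : C,
      ((F.obj X ⊗[k] F.obj Y) →ₗ[k] (F.obj X ⊗[k] F.obj Y)) →ₗ[k] V),
    DinatC2 k C F V j2 →
    ∃! φ : U →ₗ[k] V, ∀ X Y : C, φ ∘ₗ i2 X Y = j2 X Y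

/-- The maps `i_{X,Y} : End_k(F X ⊗ F Y) → U ⊗ U`, `S ⊗ T ↦ i_X(S) ⊗ i_Y(T)`,
using `End_k(F X ⊗ F Y) ≅ End_k(F X) ⊗ End_k(F Y)`. -/
def iTensor (hfd : ∀ X : C, FiniteDimensional k (F.obj X))
    (U : Type) [AddCommGroup U] [Module k U]
    (i : ∀ X : C, (F.obj X →ₗ[k] F.obj X) →ₗ[k] U) (X Y : C) :
    ((F.obj X ⊗[k] F.obj Y) →ₗ[k] (F.obj X ⊗[k] F.obj Y)) →ₗ[k] U ⊗[k] U :=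
  haveI := hfd X; haveI := hfd Y
  (TensorProduct.map (i X) (i Y)) ∘ₗ
    (homTensorHomEquiv k (F.obj X) (F.obj Y) (F.obj X) (F.obj Y)).symm.toLinearMap

section Aux
open Module LinearMap
variable {k}
variable {M N : Type} [AddCommGroup M] [Module k M] [AddCommGroup N] [Module k N]

def comulOfBasis {ι : Type} [Fintype ι] (b : Basis ι k M) :
    (M →ₗ[k] M) →ₗ[k] ((M →ₗ[k] M) ⊗[k] (M →ₗ[k] M)) :=
  ∑ i, ∑ l,
    ((TensorProduct.mk k (M →ₗ[k] M) (M →ₗ[k] M)).flip ((b.coord l).smulRight (b i))) ∘ₗ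
      (smulRightL k (b l)) ∘ₗ (LinearMap.llcomp k M M k (b.coord i))

lemma comatrixComul_eq_comulOfBasis [Module.Finite k M] :
    comatrixComul k M = comulOfBasis (Module.Free.chooseBasis k M) := rfl

lemma comulOfBasis_apply {ι : Type} [Fintype ι] (b : Basis ι k M) (S : M →ₗ[k] M) :
    comulOfBasis b S
      = ∑ i, ∑ l, ((b.coord i ∘ₗ S).smulRight (b l)) ⊗ₜ[k] ((b.coord l).smulRight (b i)) := by
  simp only [comulOfBasis, smulRightL, LinearMap.sum_apply, LinearMap.coe_comp,
    Function.comp_apply, LinearMap.coe_mk, AddHom.coe_mk, LinearMap.flip_apply,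
    TensorProduct.mk_apply, LinearMap.llcomp_apply]
  rfl

lemma sum_coord_tmul_basis {ι κ : Type} [Fintype ι] [Fintype κ]
    (b : Basis ι k M) (c : Basis κ k M) :
    (∑ i, b.coord i ⊗ₜ[k] b i : Module.Dual k M ⊗[k] M)
      = ∑ j, c.coord j ⊗ₜ[k] c j := by
  classical
  have hco : ⇑(dualTensorHom k M M) = ⇑(dualTensorHomEquivOfBasis (N := M) b) := by
    ext x; simp
  have hinj : Function.Injective (dualTensorHom k M M) := by
    rw [hco]; exact (dualTensorHomEquivOfBasis (N := M) b).injective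
  apply hinj
  have h1 : ∀ {κ : Type} [Fintype κ] (d : Basis κ k M),
      dualTensorHom k M M (∑ j, d.coord j ⊗ₜ[k] d j) = LinearMap.id := by
    intro κ _ d
    ext x
    simp [dualTensorHom_apply, Basis.coord_apply, Basis.sum_repr]
  rw [h1 b, h1 c]

end Aux

section Aux2
open Module LinearMap
variable {k}
variable {M N : Type} [AddCommGroup M] [Module k M] [AddCommGroup N] [Module k N]

def auxMap (S : M →ₗ[k] M) :
    ((Module.Dual k M ⊗[k] M) ⊗[k] (Module.Dual k M ⊗[k] M)) →ₗ[k]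
      ((M →ₗ[k] M) ⊗[k] (M →ₗ[k] M)) :=
  (TensorProduct.map (dualTensorHom k M M) (dualTensorHom k M M)) ∘ₗ
  (TensorProduct.map LinearMap.id (TensorProduct.comm k M (Module.Dual k M)).toLinearMap) ∘ₗ
  (tensorTensorTensorComm k (Module.Dual k M) M M (Module.Dual k M)).toLinearMap ∘ₗ
  (TensorProduct.map LinearMap.id (TensorProduct.comm k (Module.Dual k M) M).toLinearMap) ∘ₗ
  (TensorProduct.map (TensorProduct.map (S.dualMap) LinearMap.id) LinearMap.id)

lemma comulOfBasis_eq_auxMap {ι : Type} [Fintype ι] (b : Basis ι k M) (S : M →ₗ[k] M) :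
    comulOfBasis b S
      = auxMap S ((∑ i, b.coord i ⊗ₜ[k] b i) ⊗ₜ[k] (∑ i, b.coord i ⊗ₜ[k] b i)) := by
  rw [comulOfBasis_apply]
  rw [TensorProduct.sum_tmul]
  rw [map_sum]
  refine Finset.sum_congr rfl fun i _ => ?_
  rw [TensorProduct.tmul_sum, map_sum]
  refine Finset.sum_congr rfl fun l _ => ?_
  simp only [auxMap, LinearMap.coe_comp, Function.comp_apply, LinearEquiv.coe_coe,
    TensorProduct.map_tmul, LinearMap.id_coe, id_eq, TensorProduct.comm_tmul,
    tensorTensorTensorComm_tmul, dualTensorHom_apply]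
  congr 1

lemma comulOfBasis_indep {ι κ : Type} [Fintype ι] [Fintype κ]
    (b : Basis ι k M) (c : Basis κ k M) :
    comulOfBasis b = comulOfBasis c := by
  ext S
  rw [comulOfBasis_eq_auxMap, comulOfBasis_eq_auxMap, sum_coord_tmul_basis b c]

end Aux2

section Aux3
open Module LinearMap
variable {k}
variable {M N : Type} [AddCommGroup M] [Module k M] [AddCommGroup N] [Module k N]

lemma tensor_basis_term {ι κ : Type} [Fintype ι] [Fintype κ]
    (b : Basis ι k M) (c : Basis κ k N) (S : M →ₗ[k] M) (T : N →ₗ[k] N)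
    (i l : ι) (j m : κ) :
    (((b.tensorProduct c).coord (i, j) ∘ₗ TensorProduct.map S T).smulRight
        ((b.tensorProduct c) (l, m)))
      = TensorProduct.map ((b.coord i ∘ₗ S).smulRight (b l)) ((c.coord j ∘ₗ T).smulRight (c m)) := by
  apply TensorProduct.ext'
  intro x y
  simp only [LinearMap.smulRight_apply, LinearMap.coe_comp, Function.comp_apply,
    TensorProduct.map_tmul, Basis.tensorProduct_apply, Basis.coord_apply,
    Basis.tensorProduct_repr_tmul_apply]
  rw [TensorProduct.smul_tmul', TensorProduct.tmul_smul, TensorProduct.smul_tmul',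
    smul_smul, smul_eq_mul, mul_comm]

lemma tensor_basis_term' {ι κ : Type} [Fintype ι] [Fintype κ]
    (b : Basis ι k M) (c : Basis κ k N) (l i : ι) (m j : κ) :
    ((b.tensorProduct c).coord (l, m)).smulRight ((b.tensorProduct c) (i, j))
      = TensorProduct.map ((b.coord l).smulRight (b i)) ((c.coord m).smulRight (c j)) := by
  have h := tensor_basis_term b c LinearMap.id LinearMap.id l i m j
  simpa using h
end Aux3

section Aux4
open Module LinearMap
variable {k}
variable {M N : Type} [AddCommGroup M] [Module k M] [AddCommGroup N] [Module k N]

lemma comatrixComul_tensor_map [Module.Finite k M] [Module.Finite k N]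
    (S : M →ₗ[k] M) (T : N →ₗ[k] N) :
    comatrixComul k (M ⊗[k] N) (TensorProduct.map S T)
      = ∑ i, ∑ l, ∑ j, ∑ m,
        TensorProduct.map
            (((Module.Free.chooseBasis k M).coord i ∘ₗ S).smulRight (Module.Free.chooseBasis k M l))
            (((Module.Free.chooseBasis k N).coord j ∘ₗ T).smulRight (Module.Free.chooseBasis k N m))
          ⊗ₜ[k]
        TensorProduct.map
            (((Module.Free.chooseBasis k M).coord l).smulRight (Module.Free.chooseBasis k M i))
            (((Module.Free.chooseBasis k N).coord m).smulRight (Module.Free.chooseBasis k N j)) := by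
  set bM := Module.Free.chooseBasis k M with hbM
  set bN := Module.Free.chooseBasis k N with hbN
  rw [comatrixComul_eq_comulOfBasis, comulOfBasis_indep _ (bM.tensorProduct bN),
    comulOfBasis_apply]
  simp only [Fintype.sum_prod_type]
  refine Finset.sum_congr rfl fun i _ => ?_
  rw [Finset.sum_comm]
  refine Finset.sum_congr rfl fun l _ => Finset.sum_congr rfl fun j _ =>
    Finset.sum_congr rfl fun m _ => ?_
  rw [tensor_basis_term, tensor_basis_term']

end Aux4

lemma coend_unique_ext (U : Type) [AddCommGroup U] [Module k U]
    (i : ∀ X : C, (F.obj X →ₗ[k] F.obj X) →ₗ[k] U)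
    (hreal : IsCoendRealization.{0, 0} k C F U i)
    {W : Type} [AddCommGroup W] [Module k W] (φ₁ φ₂ : U →ₗ[k] W)
    (h : ∀ X, φ₁ ∘ₗ i X = φ₂ ∘ₗ i X) : φ₁ = φ₂ := by
  obtain ⟨hd, hu⟩ := hreal
  have hdin : DinatC k C F W (fun X => φ₂ ∘ₗ i X) := by
    intro X Y f S
    simp only [LinearMap.comp_apply]
    rw [hd X Y f S]
  obtain ⟨ψ, -, hun⟩ := hu W (fun X => φ₂ ∘ₗ i X) hdin
  exact (hun φ₁ h).trans (hun φ₂ fun X => rfl).symm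

theorem coend_of_tensor_square
    (hfd : ∀ X : C, FiniteDimensional k (F.obj X))
    (U : Type) [AddCommGroup U] [Module k U]
    (i : ∀ X : C, (F.obj X →ₗ[k] F.obj X) →ₗ[k] U)
    (hreal : IsCoendRealization.{0, 0} k C F U i)
    (Δ : U →ₗ[k] U ⊗[k] U) (ε : U →ₗ[k] k)
    (hΔ : ∀ X : C, haveI := hfd X;
      Δ ∘ₗ i X = (TensorProduct.map (i X) (i X)) ∘ₗ comatrixComul k (F.obj X))
    (hε : ∀ X : C, ε ∘ₗ i X = LinearMap.trace k (F.obj X)) :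
    -- on pure tensors, i_{X,Y}(S ⊗ T) = i_X(S) ⊗ i_Y(T):
    (∀ (X Y : C) (S : F.obj X →ₗ[k] F.obj X) (T : F.obj Y →ₗ[k] F.obj Y),
      haveI := hfd X; haveI := hfd Y
      iTensor k C F hfd U i X Y (TensorProduct.map S T) = i X S ⊗ₜ[k] i Y T) ∧
    -- U ⊗ U with the maps i_{X,Y} is a realization of Coend(F ⊗ F):
    IsCoend2Realization.{0, 0} k C F (U ⊗[k] U) (iTensor k C F hfd U i) ∧
    -- and each i_{X,Y} is a coalgebra map to the tensor product coalgebra: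
    (∀ X Y : C,
      haveI := hfd X; haveI := hfd Y
      ((tensorTensorTensorComm k U U U U).toLinearMap ∘ₗ (TensorProduct.map Δ Δ)) ∘ₗ
          iTensor k C F hfd U i X Y
        = (TensorProduct.map (iTensor k C F hfd U i X Y) (iTensor k C F hfd U i X Y)) ∘ₗ
            comatrixComul k (F.obj X ⊗[k] F.obj Y) ∧
      ((TensorProduct.lid k k).toLinearMap ∘ₗ (TensorProduct.map ε ε)) ∘ₗ
          iTensor k C F hfd U i X Y
        = LinearMap.trace k (F.obj X ⊗[k] F.obj Y)) := by
  -- Part 1: pure tensor formula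
  have hpure : ∀ (X Y : C) (S : F.obj X →ₗ[k] F.obj X) (T : F.obj Y →ₗ[k] F.obj Y),
      iTensor k C F hfd U i X Y (TensorProduct.map S T) = i X S ⊗ₜ[k] i Y T := by
    intro X Y S T
    haveI := hfd X; haveI := hfd Y
    have he : (homTensorHomEquiv k (F.obj X) (F.obj Y) (F.obj X) (F.obj Y)) (S ⊗ₜ[k] T)
        = TensorProduct.map S T := by
      rw [homTensorHomEquiv_apply, TensorProduct.homTensorHomMap_apply]
    simp only [iTensor, LinearMap.coe_comp, Function.comp_apply, LinearEquiv.coe_coe]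
    rw [← he, LinearEquiv.symm_apply_apply, TensorProduct.map_tmul]
  -- Dinaturality of iTensor
  have hdin2 : DinatC2 k C F (U ⊗[k] U) (iTensor k C F hfd U i) := by
    intro X X' Y Y' f g T
    haveI := hfd X; haveI := hfd X'; haveI := hfd Y; haveI := hfd Y'
    obtain ⟨t, rfl⟩ :=
      (homTensorHomEquiv k (F.obj X) (F.obj Y) (F.obj X') (F.obj Y')).surjective T
    induction t using TensorProduct.induction_on with
    | zero => simp
    | add a b ha hb =>
      simp only [map_add, LinearMap.comp_add, LinearMap.add_comp] at ha hb ⊢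
      rw [ha, hb]
    | tmul S T₀ =>
      rw [homTensorHomEquiv_apply, TensorProduct.homTensorHomMap_apply,
        ← TensorProduct.map_comp, ← TensorProduct.map_comp, hpure, hpure,
        hreal.1 X X' f S, hreal.1 Y Y' g T₀]
  refine ⟨hpure, ⟨hdin2, ?_⟩, ?_⟩
  · -- universal property
    intro V _ _ j2 hj2
    have step1 : ∀ Y : C, ∃! ψ : U →ₗ[k] ((F.obj Y →ₗ[k] F.obj Y) →ₗ[k] V),
        ∀ X : C, ψ ∘ₗ i X
          = (TensorProduct.mapBilinear (RingHom.id k) (F.obj X) (F.obj Y) (F.obj X) (F.obj Y)).compr₂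
              (j2 X Y) := by
      intro Y
      apply hreal.2
      intro X X' f S
      apply LinearMap.ext; intro T₀
      have h := hj2 X X' Y Y f (𝟙 Y) (TensorProduct.map S T₀)
      simp only [CategoryTheory.Functor.map_id] at h
      have hid : ((𝟙 (F.obj Y) : F.obj Y ⟶ F.obj Y).hom : F.obj Y →ₗ[k] F.obj Y)
          = LinearMap.id := rfl
      rw [hid, ← TensorProduct.map_comp, ← TensorProduct.map_comp,
        LinearMap.id_comp, LinearMap.comp_id] at h
      simpa [TensorProduct.mapBilinear_apply] using h
    choose ψ hψ hψu using step1
    have hψ' : ∀ (Y X : C) (S : F.obj X →ₗ[k] F.obj X) (T₀ : F.obj Y →ₗ[k] F.obj Y),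
        ψ Y (i X S) T₀ = j2 X Y (TensorProduct.map S T₀) := by
      intro Y X S T₀
      have := LinearMap.congr_fun (hψ Y X) S
      simp only [LinearMap.comp_apply] at this
      rw [this]
      simp [TensorProduct.mapBilinear_apply]
    have step2 : DinatC k C F (U →ₗ[k] V) (fun Y => (ψ Y).flip) := by
      intro Y Y' g T
      apply coend_unique_ext k C F U i hreal
      intro X
      apply LinearMap.ext; intro S
      simp only [LinearMap.comp_apply, LinearMap.flip_apply]
      rw [hψ', hψ']
      have h := hj2 X X Y Y' (𝟙 X) g (TensorProduct.map S T)
      simp only [CategoryTheory.Functor.map_id] at h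
      have hid : ((𝟙 (F.obj X) : F.obj X ⟶ F.obj X).hom : F.obj X →ₗ[k] F.obj X)
          = LinearMap.id := rfl
      rw [hid, ← TensorProduct.map_comp, ← TensorProduct.map_comp,
        LinearMap.id_comp, LinearMap.comp_id] at h
      exact h
    obtain ⟨χ, hχ, -⟩ := hreal.2 (U →ₗ[k] V) (fun Y => (ψ Y).flip) step2
    have hχ' : ∀ (Y : C) (T₀ : F.obj Y →ₗ[k] F.obj Y) (u : U),
        χ (i Y T₀) u = ψ Y u T₀ := by
      intro Y T₀ u
      have := LinearMap.congr_fun (hχ Y) T₀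
      simp only [LinearMap.comp_apply] at this
      rw [this, LinearMap.flip_apply]
    have hφval : ∀ (X Y : C) (S : F.obj X →ₗ[k] F.obj X) (T₀ : F.obj Y →ₗ[k] F.obj Y),
        TensorProduct.lift χ.flip (i X S ⊗ₜ[k] i Y T₀) = j2 X Y (TensorProduct.map S T₀) := by
      intro X Y S T₀
      rw [TensorProduct.lift.tmul, LinearMap.flip_apply, hχ', hψ']
    refine ⟨TensorProduct.lift χ.flip, ?_, ?_⟩
    · intro X Y
      haveI := hfd X; haveI := hfd Y
      apply LinearMap.ext; intro T
      obtain ⟨t, rfl⟩ :=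
        (homTensorHomEquiv k (F.obj X) (F.obj Y) (F.obj X) (F.obj Y)).surjective T
      induction t using TensorProduct.induction_on with
      | zero => simp
      | add a b ha hb =>
        simp only [map_add, LinearMap.comp_apply] at ha hb ⊢
        rw [ha, hb]
      | tmul S T₀ =>
        rw [homTensorHomEquiv_apply, TensorProduct.homTensorHomMap_apply]
        simp only [LinearMap.comp_apply]
        rw [hpure, hφval]
    · intro φ' hφ'
      have hpair : ∀ (X Y : C) (S : F.obj X →ₗ[k] F.obj X) (T₀ : F.obj Y →ₗ[k] F.obj Y),
          φ' (i X S ⊗ₜ[k] i Y T₀) = j2 X Y (TensorProduct.map S T₀) := by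
        intro X Y S T₀
        have := LinearMap.congr_fun (hφ' X Y) (TensorProduct.map S T₀)
        simp only [LinearMap.comp_apply] at this
        rw [hpure] at this
        exact this
      have hfix : ∀ (Y : C) (T₀ : F.obj Y →ₗ[k] F.obj Y),
          φ' ∘ₗ (TensorProduct.mk k U U).flip (i Y T₀)
            = TensorProduct.lift χ.flip ∘ₗ (TensorProduct.mk k U U).flip (i Y T₀) := by
        intro Y T₀
        apply coend_unique_ext k C F U i hreal
        intro X
        apply LinearMap.ext; intro S
        simp only [LinearMap.comp_apply, LinearMap.flip_apply, TensorProduct.mk_apply]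
        rw [hpair, hφval]
      have hfix2 : ∀ u : U,
          φ'.comp (TensorProduct.mk k U U u)
            = (TensorProduct.lift χ.flip).comp (TensorProduct.mk k U U u) := by
        intro u
        have h2 : ((LinearMap.llcomp k U (U ⊗[k] U) V φ') ∘ₗ TensorProduct.mk k U U).flip
            = ((LinearMap.llcomp k U (U ⊗[k] U) V (TensorProduct.lift χ.flip)) ∘ₗ
                TensorProduct.mk k U U).flip := by
          apply coend_unique_ext k C F U i hreal
          intro Y
          apply LinearMap.ext; intro T₀
          apply LinearMap.ext; intro u'
          have := LinearMap.congr_fun (hfix Y T₀) u'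
          simpa using this
        have := LinearMap.congr_fun (LinearMap.congr_fun h2.symm.symm u)
        apply LinearMap.ext; intro v
        have h3 := LinearMap.congr_fun (congrArg LinearMap.flip h2) u
        have h4 := LinearMap.congr_fun h3 v
        simpa using h4
      apply TensorProduct.ext'
      intro u v
      exact LinearMap.congr_fun (hfix2 u) v
  · -- coalgebra map
    intro X Y
    haveI := hfd X; haveI := hfd Y
    constructor
    · apply LinearMap.ext; intro T
      obtain ⟨t, rfl⟩ :=
        (homTensorHomEquiv k (F.obj X) (F.obj Y) (F.obj X) (F.obj Y)).surjective T
      induction t using TensorProduct.induction_on with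
      | zero => simp only [map_zero, LinearMap.comp_apply, LinearEquiv.coe_coe]
      | add a b ha hb =>
        simp only [map_add, LinearMap.comp_apply, LinearEquiv.coe_coe] at ha hb ⊢
        rw [ha, hb]
      | tmul S T₀ =>
        rw [homTensorHomEquiv_apply, TensorProduct.homTensorHomMap_apply]
        simp only [LinearMap.comp_apply, LinearEquiv.coe_coe]
        rw [hpure, comatrixComul_tensor_map]
        have hX : Δ (i X S) = TensorProduct.map (i X) (i X) (comatrixComul k (F.obj X) S) := by
          have := LinearMap.congr_fun (hΔ X) S
          simpa using this
        have hY : Δ (i Y T₀) = TensorProduct.map (i Y) (i Y) (comatrixComul k (F.obj Y) T₀) := by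
          have := LinearMap.congr_fun (hΔ Y) T₀
          simpa using this
        rw [TensorProduct.map_tmul, hX, hY, comatrixComul_eq_comulOfBasis,
          comatrixComul_eq_comulOfBasis, comulOfBasis_apply, comulOfBasis_apply]
        simp only [map_sum, TensorProduct.sum_tmul, TensorProduct.tmul_sum,
          TensorProduct.map_tmul, tensorTensorTensorComm_tmul]
        simp only [hpure]
        conv_lhs => enter [2, j]; rw [Finset.sum_comm]
        rw [Finset.sum_comm]
        conv_lhs => enter [2, i, 2, j]; rw [Finset.sum_comm]
        conv_lhs => enter [2, i]; rw [Finset.sum_comm]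
    · apply LinearMap.ext; intro T
      obtain ⟨t, rfl⟩ :=
        (homTensorHomEquiv k (F.obj X) (F.obj Y) (F.obj X) (F.obj Y)).surjective T
      induction t using TensorProduct.induction_on with
      | zero => simp only [map_zero, LinearMap.comp_apply, LinearEquiv.coe_coe]
      | add a b ha hb =>
        simp only [map_add, LinearMap.comp_apply, LinearEquiv.coe_coe] at ha hb ⊢
        rw [ha, hb]
      | tmul S T₀ =>
        rw [homTensorHomEquiv_apply, TensorProduct.homTensorHomMap_apply]
        simp only [LinearMap.comp_apply, LinearEquiv.coe_coe]
        rw [hpure, TensorProduct.map_tmul]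
        have hX : ε (i X S) = LinearMap.trace k (F.obj X) S := LinearMap.congr_fun (hε X) S
        have hY : ε (i Y T₀) = LinearMap.trace k (F.obj Y) T₀ := LinearMap.congr_fun (hε Y) T₀
        rw [hX, hY, TensorProduct.lid_tmul, LinearMap.trace_tensorProduct', smul_eq_mul,
          mul_comm]
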